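/- For g ∈ G, i ∈ ℕ and n ∈ ℤ with n + i ≥ 0, set T(g,i,n) := (S*)^i U_g S^{n+i} ∈ B(ℓ²(G)). Then: (a) T(g,i,n) = T(φ(g), i+1, n), so T(g,i,n) depends only on the class [g,i] ∈ 𝔾 and on n; (b) T(g,i,n)* = T(g^{-1}, n+i, −n); (c) for all g, h ∈ G, i, j ∈ ℕ and n, m ∈ ℤ with n+i ≥ 0 and m+j ≥ 0, T(g,i,n)·T(h,j,m)·T(h,j,m)* = T(φ^j(g)·φ^{i+n}(h), i+j, n+m)·T(h,j,m)*. Thus the assignment ([g,i], n) ↦ (S*)^i U_g S^{n+i} is a well-defined partial representation of the group S̄ = 𝔾 ⋊_{φ̄} ℤ on ℓ²(G). -/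

import Mathlib

/-- `ℓ²(G)`. -/
noncomputable abbrev l2 (G : Type*) := lp (fun _ : G => ℂ) 2

/-- The orthonormal basis vector `ξ_h ∈ ℓ²(G)`. -/
noncomputable def xi (G : Type*) [DecidableEq G] (h : G) : l2 G := lp.single 2 h (1 : ℂ)

/-- `φ^n(G)` as a subgroup of `G`. -/
def rng {G : Type*} [Group G] (φ : Monoid.End G) (n : ℕ) : Subgroup G :=
  MonoidHom.range ((φ ^ n : Monoid.End G) : G →* G)

/-- The operator `T(g,i,n) = (S*)^i U_g S^{n+i}` (for `n + i ≥ 0`). -/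
noncomputable def T {G : Type*} (U : G → (l2 G →L[ℂ] l2 G)) (S : l2 G →L[ℂ] l2 G)
    (g : G) (i : ℕ) (n : ℤ) : l2 G →L[ℂ] l2 G :=
  (star S) ^ i * U g * S ^ (n + (i : ℤ)).toNat

section Aux

set_option linter.unusedSectionVars false

variable {G : Type*} [Group G] [DecidableEq G]

local notation "⟪" x ", " y "⟫" => @inner ℂ _ _ x y

private lemma lp_coord (u : l2 G) (y : G) : ⟪xi G y, u⟫ = u y := by
  simp [xi, lp.inner_single_left]

private lemma xi_coe (x y : G) : (xi G x : ∀ _ : G, ℂ) y = if y = x then 1 else 0 := by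
  rw [xi, lp.single_apply]
  split_ifs with h
  · subst h; simp [Pi.single_apply]
  · simp [Pi.single_apply, h]

private lemma inner_xi_xi (y x : G) : ⟪xi G y, xi G x⟫ = if y = x then 1 else 0 := by
  rw [lp_coord, xi_coe]

private lemma vec_ext {u v : l2 G} (h : ∀ y, ⟪xi G y, u⟫ = ⟪xi G y, v⟫) : u = v := by
  refine lp.ext (funext fun y => ?_)
  rw [← lp_coord, ← lp_coord, h]

private lemma op_ext {A B : l2 G →L[ℂ] l2 G} (h : ∀ x, A (xi G x) = B (xi G x)) : A = B := by
  refine ContinuousLinearMap.ext fun u => ?_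
  have hs := lp.hasSum_single (E := fun _ : G => ℂ) (p := 2) (by norm_num) u
  have h1 : ∀ x : G, lp.single 2 x (u x) = u x • xi G x := fun x => by
    rw [xi, ← lp.single_smul]
    norm_num
  have hA := hs.mapL A
  have hB := hs.mapL B
  simp only [h1, map_smul] at hA hB
  simp only [h] at hA
  exact hA.unique hB

private lemma star_coord (A : l2 G →L[ℂ] l2 G) (u : l2 G) (y : G) :
    ⟪xi G y, (star A) u⟫ = ⟪A (xi G y), u⟫ := by
  rw [ContinuousLinearMap.star_eq_adjoint, ContinuousLinearMap.adjoint_inner_right]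

variable (φ : Monoid.End G) (hinj : Function.Injective φ)
  (U : G → (l2 G →L[ℂ] l2 G)) (S : l2 G →L[ℂ] l2 G)
  (hU : ∀ g h : G, U g (xi G h) = xi G (g * h))
  (hS : ∀ h : G, S (xi G h) = xi G (φ h))

include hS hinj in
private lemma Sstar_xi_mem (k : G) : (star S) (xi G (φ k)) = xi G k := by
  refine vec_ext fun y => ?_
  rw [star_coord, hS, inner_xi_xi, inner_xi_xi]
  simp [hinj.eq_iff]

include hS in
private lemma Sstar_xi_zero (x : G) (hx : ∀ k, φ k ≠ x) : (star S) (xi G x) = 0 := by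
  refine vec_ext fun y => ?_
  rw [star_coord, hS, inner_xi_xi, if_neg (hx y), inner_zero_right]

include hU in
private lemma Ustar (g : G) : star (U g) = U g⁻¹ := by
  refine op_ext fun x => ?_
  refine vec_ext fun y => ?_
  rw [star_coord, hU, hU, inner_xi_xi, inner_xi_xi]
  have : (g * y = x) ↔ (y = g⁻¹ * x) := by
    constructor
    · rintro rfl; simp
    · rintro rfl; simp
  simp [this]

include hS in
private lemma S_pow_xi (k : ℕ) (x : G) : (S ^ k) (xi G x) = xi G ((φ ^ k) x) := by
  induction k generalizing x with
  | zero => simp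
  | succ k ih =>
      rw [pow_succ, pow_succ, ContinuousLinearMap.mul_apply, hS, ih]
      rfl

include hS hinj in
private lemma Sstar_pow_xi_mem (k : ℕ) (x : G) :
    ((star S) ^ k) (xi G ((φ ^ k) x)) = xi G x := by
  induction k with
  | zero => simp
  | succ k ih =>
      have h1 : (φ ^ (k + 1)) x = φ ((φ ^ k) x) := by rw [pow_succ']; rfl
      rw [h1, pow_succ, ContinuousLinearMap.mul_apply,
        Sstar_xi_mem φ hinj S hS, ih]

include hS hinj in
private lemma Sstar_pow_xi_zero (k : ℕ) (x : G) (hx : ∀ w, (φ ^ k) w ≠ x) :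
    ((star S) ^ k) (xi G x) = 0 := by
  induction k generalizing x with
  | zero => exact absurd rfl (hx x)
  | succ k ih =>
      rw [pow_succ, ContinuousLinearMap.mul_apply]
      by_cases hr : ∃ w, φ w = x
      · obtain ⟨w, rfl⟩ := hr
        rw [Sstar_xi_mem φ hinj S hS]
        refine ih w fun v hv => ?_
        refine hx v ?_
        rw [← hv, pow_succ']
        rfl
      · push_neg at hr
        rw [Sstar_xi_zero φ S hS x hr, map_zero]

include hS hU in
private lemma T_apply (g : G) (i : ℕ) (n : ℤ) (x : G) :
    T U S g i n (xi G x) =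
      ((star S) ^ i) (xi G (g * (φ ^ (n + (i : ℤ)).toNat) x)) := by
  rw [T, ContinuousLinearMap.mul_apply, ContinuousLinearMap.mul_apply,
    S_pow_xi φ S hS, hU]

end Aux

/-- **Statement 9.** With `T(g,i,n) = (S*)^i U_g S^{n+i}` for `n + i ≥ 0`:
(PR1) `T(e,0,0) = 1`;
(a) `T(g,i,n) = T(φ(g),i+1,n)`, and more generally `T(g,i,n)` only depends on the class
`[g,i] ∈ 𝔾` (i.e. on `(g,i)` up to `φ^j(g) = φ^i(h)`) and on `n`;
(b) `T(g,i,n)* = T(g⁻¹, n+i, −n)`;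
(c) `T(g,i,n)·T(h,j,m)·T(h,j,m)* = T(φ^j(g)·φ^{i+n}(h), i+j, n+m)·T(h,j,m)*`.
Thus `([g,i],n) ↦ (S*)^i U_g S^{n+i}` is a well-defined partial representation of the
group `S̄ = 𝔾 ⋊_{φ̄} ℤ` on `ℓ²(G)`. -/
theorem T_partial_representation (G : Type*) [Group G] [DecidableEq G]
    (φ : Monoid.End G) (hinj : Function.Injective φ) (hfin : Finite (G ⧸ rng φ 1))
    (U : G → (l2 G →L[ℂ] l2 G)) (S : l2 G →L[ℂ] l2 G)
    (hU : ∀ g h : G, U g (xi G h) = xi G (g * h))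
    (hS : ∀ h : G, S (xi G h) = xi G (φ h)) :
    (T U S (1 : G) 0 0 = 1) ∧
    (∀ (g : G) (i : ℕ) (n : ℤ), 0 ≤ n + (i : ℤ) →
      T U S g i n = T U S (φ g) (i + 1) n) ∧
    (∀ (g h : G) (i j : ℕ) (n : ℤ), 0 ≤ n + (i : ℤ) → 0 ≤ n + (j : ℤ) →
      (φ ^ j) g = (φ ^ i) h → T U S g i n = T U S h j n) ∧
    (∀ (g : G) (i : ℕ) (n : ℤ), 0 ≤ n + (i : ℤ) →
      star (T U S g i n) = T U S g⁻¹ (n + (i : ℤ)).toNat (-n)) ∧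
    (∀ (g h : G) (i j : ℕ) (n m : ℤ), 0 ≤ n + (i : ℤ) → 0 ≤ m + (j : ℤ) →
      T U S g i n * T U S h j m * star (T U S h j m) =
        T U S ((φ ^ j) g * (φ ^ (n + (i : ℤ)).toNat) h) (i + j) (n + m) *
          star (T U S h j m)) := by
  -- part (PR1)
  have hPR1 : T U S (1 : G) 0 0 = 1 := by
    refine op_ext fun x => ?_
    rw [T_apply φ U S hU hS]
    simp
  -- part (a)
  have ha : ∀ (g : G) (i : ℕ) (n : ℤ), 0 ≤ n + (i : ℤ) →
      T U S g i n = T U S (φ g) (i + 1) n := by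
    intro g i n hn
    refine op_ext fun x => ?_
    rw [T_apply φ U S hU hS, T_apply φ U S hU hS]
    have hnat : (n + ((i : ℕ) + 1 : ℕ) : ℤ).toNat = (n + (i : ℤ)).toNat + 1 := by
      push_cast; omega
    rw [hnat]
    set a := (n + (i : ℤ)).toNat with hadef
    have h1 : (φ ^ (a + 1)) x = φ ((φ ^ a) x) := by rw [pow_succ']; rfl
    have h2 : φ g * φ ((φ ^ a) x) = φ (g * (φ ^ a) x) := (map_mul φ _ _).symm
    rw [h1, h2, pow_succ, ContinuousLinearMap.mul_apply, Sstar_xi_mem φ hinj S hS]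
  -- part (a'): iterate
  have hiter : ∀ (k : ℕ) (g : G) (i : ℕ) (n : ℤ), 0 ≤ n + (i : ℤ) →
      T U S g i n = T U S ((φ ^ k) g) (i + k) n := by
    intro k
    induction k with
    | zero => intro g i n hn; simp
    | succ k ih =>
        intro g i n hn
        rw [ih g i n hn, ha ((φ ^ k) g) (i + k) n (by push_cast; omega)]
        have h1 : φ ((φ ^ k) g) = (φ ^ (k + 1)) g := by rw [pow_succ']; rfl
        rw [h1, ← add_assoc]
  have ha' : ∀ (g h : G) (i j : ℕ) (n : ℤ), 0 ≤ n + (i : ℤ) → 0 ≤ n + (j : ℤ) →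
      (φ ^ j) g = (φ ^ i) h → T U S g i n = T U S h j n := by
    intro g h i j n hni hnj hgh
    rw [hiter j g i n hni, hiter i h j n hnj, hgh, add_comm i j]
  -- part (b)
  have hb : ∀ (g : G) (i : ℕ) (n : ℤ), 0 ≤ n + (i : ℤ) →
      star (T U S g i n) = T U S g⁻¹ (n + (i : ℤ)).toNat (-n) := by
    intro g i n hn
    have hnat : (-n + ((n + (i : ℤ)).toNat : ℤ)).toNat = i := by omega
    rw [T, T, hnat, star_mul, star_mul, star_pow, star_pow, star_star,
      Ustar U hU, mul_assoc]
  refine ⟨hPR1, ha, ha', hb, ?_⟩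
  -- part (c)
  intro g h i j n m hni hmj
  set a := (n + (i : ℤ)).toNat with hadef
  set b := (m + (j : ℤ)).toNat with hbdef
  have hstar : star (T U S h j m) = T U S h⁻¹ b (-m) := hb h j m hmj
  have hbnat : (-m + (b : ℤ)).toNat = j := by omega
  have hcnat : (n + m + ((i : ℕ) + j : ℕ) : ℤ).toNat = a + b := by push_cast; omega
  refine op_ext fun x => ?_
  rw [ContinuousLinearMap.mul_apply, ContinuousLinearMap.mul_apply,
    ContinuousLinearMap.mul_apply, hstar, T_apply φ U S hU hS, hbnat]
  by_cases hr : ∃ w, (φ ^ b) w = h⁻¹ * (φ ^ j) x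
  · obtain ⟨w, hw⟩ := hr
    rw [← hw, Sstar_pow_xi_mem φ hinj S hS]
    have hmid : T U S h j m (xi G w) = xi G x := by
      rw [T_apply φ U S hU hS, ← hbdef]
      have h1 : h * (φ ^ b) w = (φ ^ j) x := by
        rw [hw, mul_inv_cancel_left]
      rw [h1, Sstar_pow_xi_mem φ hinj S hS]
    rw [hmid, T_apply φ U S hU hS, T_apply φ U S hU hS, hcnat, ← hadef]
    have hkey : (φ ^ j) g * (φ ^ a) h * (φ ^ (a + b)) w = (φ ^ j) (g * (φ ^ a) x) := by
      have e1 : (φ ^ (a + b)) w = (φ ^ a) ((φ ^ b) w) :=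
        DFunLike.congr_fun (pow_add φ a b) w
      have e3 : h * (φ ^ b) w = (φ ^ j) x := by
        rw [hw, mul_inv_cancel_left]
      have e4 : (φ ^ a) ((φ ^ j) x) = (φ ^ j) ((φ ^ a) x) :=
        DFunLike.congr_fun (pow_mul_comm φ a j) x
      calc (φ ^ j) g * (φ ^ a) h * (φ ^ (a + b)) w
          = (φ ^ j) g * ((φ ^ a) h * (φ ^ a) ((φ ^ b) w)) := by rw [e1, mul_assoc]
        _ = (φ ^ j) g * (φ ^ a) (h * (φ ^ b) w) := by rw [map_mul]
        _ = (φ ^ j) g * (φ ^ j) ((φ ^ a) x) := by rw [e3, e4]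
        _ = (φ ^ j) (g * (φ ^ a) x) := by rw [map_mul]
    rw [hkey, pow_add, ContinuousLinearMap.mul_apply, Sstar_pow_xi_mem φ hinj S hS]
  · push_neg at hr
    rw [Sstar_pow_xi_zero φ hinj S hS b _ hr]
    simp only [map_zero]
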